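/- Let r > 0 and a₁ = a₂ > 0 be real, set x* = 1/(a₁ + a₂) = 1/(2a₁), and suppose τ₁ > 1/(2·x*·r·a₁) = 1/r. Then there exist τ₂ > 0 and ω > 0 such that s = iω is a root of the characteristic equation s + r·x*·a₁·e^{−sτ₁} + r·x*·a₂·e^{−sτ₂} = 0 of the linearized two-lag blowfly model, i.e., iω + (r/2)·(e^{−iωτ₁} + e^{−iωτ₂}) = 0. -/

import Mathlib

open Real Complex

lemma sin_fix (r τ₁ : ℝ) (hr : 0 < r) (h : 1 < r * τ₁) :
    ∃ ω > (0:ℝ), r * Real.sin (ω * τ₁) = ω := by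
  have hτ : 0 < τ₁ := by nlinarith
  set δ : ℝ := r * τ₁ - 1 with hδdef
  have hδ : 0 < δ := by simp [hδdef]; linarith
  set ε : ℝ := min (1/τ₁) (Real.sqrt (δ / (r * τ₁^3))) with hεdef
  have hpos : 0 < ε := by
    apply lt_min (by positivity)
    apply Real.sqrt_pos.2
    positivity
  have hε1 : ε * τ₁ ≤ 1 := by
    have : ε ≤ 1/τ₁ := min_le_left _ _
    calc ε * τ₁ ≤ (1/τ₁) * τ₁ := by nlinarith
    _ = 1 := by field_simp
  have hε2 : ε^2 ≤ δ / (r * τ₁^3) := by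
    have h1 : ε ≤ Real.sqrt (δ / (r * τ₁^3)) := min_le_right _ _
    have h2 : (Real.sqrt (δ / (r * τ₁^3)))^2 = δ / (r * τ₁^3) := by
      rw [Real.sq_sqrt]; positivity
    nlinarith
  have hε2' : r * τ₁^3 * ε^2 ≤ δ := by
    have hrt : 0 < r * τ₁^3 := by positivity
    calc r * τ₁^3 * ε^2 ≤ r * τ₁^3 * (δ / (r * τ₁^3)) := by nlinarith
    _ = δ := by field_simp
  -- f ε ≥ 0
  have hfε : ε ≤ r * Real.sin (ε * τ₁) := by
    have hx : 0 < ε * τ₁ := by positivity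
    have := Real.sin_gt_sub_cube hx
    nlinarith [this]
  have hfb : r * Real.sin (2*r * τ₁) ≤ 2*r := by
    have := Real.sin_le_one (2*r*τ₁)
    nlinarith
  have hab : ε ≤ 2*r := by
    have h1 : ε ≤ 1/τ₁ := min_le_left _ _
    have : 1/τ₁ < r := by rw [div_lt_iff₀ hτ]; linarith
    linarith
  have hcont : Continuous (fun ω : ℝ => r * Real.sin (ω * τ₁) - ω) := by fun_prop
  obtain ⟨ω, hωmem, hωeq⟩ := intermediate_value_Icc' hab hcont.continuousOn
    (Set.mem_Icc.mpr ⟨by linarith, by linarith⟩ :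
      (0:ℝ) ∈ Set.Icc (r * Real.sin (2*r * τ₁) - 2*r) (r * Real.sin (ε * τ₁) - ε))
  replace hωeq : r * Real.sin (ω * τ₁) - ω = 0 := hωeq
  exact ⟨ω, lt_of_lt_of_le hpos hωmem.1, by linarith⟩

theorem blowfly_imaginary_root_exists
    (r a₁ a₂ xstar τ₁ : ℝ) (hr : 0 < r) (ha₁ : 0 < a₁) (ha : a₁ = a₂)
    (hx : xstar = 1 / (a₁ + a₂)) (hτ₁ : τ₁ > 1 / (2 * xstar * r * a₁)) :
    ∃ τ₂ > (0 : ℝ), ∃ ω > (0 : ℝ),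
      Complex.I * ω +
        (r * xstar * a₁ : ℝ) * Complex.exp (-(Complex.I * ω) * τ₁) +
        (r * xstar * a₂ : ℝ) * Complex.exp (-(Complex.I * ω) * τ₂) = 0 := by
  have ha₁' : a₁ ≠ 0 := ne_of_gt ha₁
  have hxv : xstar = 1 / (2 * a₁) := by rw [hx, ← ha]; ring_nf
  have hcoef : r * xstar * a₁ = r / 2 := by rw [hxv]; field_simp
  have hcoef2 : r * xstar * a₂ = r / 2 := by rw [← ha, hcoef]
  have hrτ : 1 < r * τ₁ := by
    have h1 : 2 * xstar * r * a₁ = r := by rw [hxv]; field_simp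
    rw [h1] at hτ₁
    rw [gt_iff_lt, div_lt_iff₀ hr] at hτ₁
    linarith
  obtain ⟨ω, hω, hsin⟩ := sin_fix r τ₁ hr hrτ
  have hr' : (r:ℂ) ≠ 0 := by exact_mod_cast ne_of_gt hr
  have hω' : ω ≠ 0 := ne_of_gt hω
  set E : ℂ := Complex.exp (-(Complex.I * ω) * τ₁) with hE
  set z : ℂ := -E - ((2*ω/r : ℝ) : ℂ) * Complex.I with hz
  -- compute re and im of E
  have hEeq : E = Complex.exp (((-(ω*τ₁)):ℝ) * Complex.I) := by
    rw [hE]; congr 1; push_cast; ring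
  have hEre : E.re = Real.cos (ω*τ₁) := by
    rw [hEeq, Complex.exp_ofReal_mul_I_re, Real.cos_neg]
  have hEim : E.im = -Real.sin (ω*τ₁) := by
    rw [hEeq, Complex.exp_ofReal_mul_I_im, Real.sin_neg]
  have hs : Real.sin (ω*τ₁) = ω/r := by field_simp; linarith
  have hre : z.re = -Real.cos (ω*τ₁) := by
    rw [hz]; simp [hEre]
  have him : z.im = -(ω/r) := by
    rw [hz]; simp [Complex.sub_im, Complex.neg_im, hEim, hs]; ring
  have habs : ‖z‖ = 1 := by
    have hnorm : Complex.normSq z = 1 := by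
      rw [Complex.normSq_apply, hre, him, ← hs]
      linear_combination Real.sin_sq_add_cos_sq (ω*τ₁)
    rw [← Complex.sq_norm] at hnorm
    nlinarith [norm_nonneg z, hnorm]
  set τ₂ : ℝ := (2*Real.pi - z.arg)/ω with hτ₂
  have hτ₂pos : 0 < τ₂ := by
    apply div_pos _ hω
    have := Complex.arg_le_pi z
    have := Real.pi_pos
    linarith
  refine ⟨τ₂, hτ₂pos, ω, hω, ?_⟩
  have hωτ₂ : ω * τ₂ = 2*Real.pi - z.arg := by rw [hτ₂]; field_simp
  have hexp : Complex.exp (-(Complex.I * ω) * τ₂) = z := by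
    have h1 : -(Complex.I * (ω:ℂ)) * τ₂ = ((z.arg : ℝ) : ℂ) * Complex.I - 2*Real.pi*Complex.I := by
      have : (ω:ℂ) * τ₂ = ((2*Real.pi - z.arg : ℝ) : ℂ) := by exact_mod_cast congrArg Complex.ofReal hωτ₂
      push_cast at this ⊢
      rw [show -(Complex.I * (ω:ℂ)) * τ₂ = -((ω:ℂ)*τ₂) * Complex.I by ring, this]
      ring
    rw [h1, Complex.exp_sub, Complex.exp_two_pi_mul_I, div_one]
    have := Complex.norm_mul_exp_arg_mul_I z
    rw [habs] at this
    simpa using this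
  rw [hcoef, hcoef2, hexp, ← hE, hz]
  push_cast
  field_simp
  ring
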